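/- For every $k \geq 2$ and every tuple of points $v = (v_1, \ldots, v_k) \in (\mathbb{R}^d)^k$, there exists a partition of $\{1, \ldots, k\}$ into two nonempty sets $S$ and $T$ such that $\min_{i \in S, j \in T} |v_i - v_j| \geq D_k(v)/k^2$, where $D_k(v) := \max_{i \leq k} \sum_{j=1}^k |v_i - v_j|$. -/

import Mathlib

/-- For every tuple `v = (v₁,…,v_k)` of points in `ℝ^d` (`k ≥ 2`), there is a partition of
`{1,…,k}` into two nonempty sets `S`, `T = Sᶜ` such that the minimal distance between the
two groups is at least `D_k(v)/k²`, where `D_k(v) = max_i ∑_j |v_i - v_j|` is the `ℓ¹` diameter. -/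
theorem stmt4 (d k : ℕ) (hk : 2 ≤ k) (v : Fin k → EuclideanSpace ℝ (Fin d)) :
    ∃ S : Finset (Fin k), S.Nonempty ∧ Sᶜ.Nonempty ∧
      ∀ i ∈ S, ∀ j ∈ Sᶜ,
        dist (v i) (v j) ≥ (⨆ i, ∑ j, dist (v i) (v j)) / (k : ℝ) ^ 2 := by
  classical
  haveI : Nonempty (Fin k) := ⟨⟨0, by omega⟩⟩
  haveI : Nontrivial (Fin k) := Fin.nontrivial_iff_two_le.mpr hk
  have hk0 : (0:ℝ) < k := by exact_mod_cast (by omega : 0 < k)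
  set F : Fin k → ℝ := fun i => ∑ j, dist (v i) (v j) with hF
  obtain ⟨a, ha⟩ := Finite.exists_max F
  have hD : (⨆ i, F i) ≤ F a := ciSup_le ha
  set g : Fin k → ℝ := fun j => dist (v a) (v j) with hg
  obtain ⟨b, hb⟩ := Finite.exists_max g
  set M := g b with hM
  have hga : g a = 0 := by simp [hg]
  have hgnn : ∀ j, 0 ≤ g j := fun j => dist_nonneg
  have hFa : F a ≤ k * M := by
    have : F a ≤ ∑ _j : Fin k, M := Finset.sum_le_sum fun j _ => hb j
    simpa [mul_comm] using this
  by_cases hMpos : M ≤ 0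
  · -- all points coincide; any split works
    refine ⟨{a}, ⟨a, Finset.mem_singleton_self a⟩, ?_, ?_⟩
    · obtain ⟨c, hc⟩ := exists_ne a
      exact ⟨c, by simpa using hc⟩
    · intro i _ j _
      have h1 : (⨆ i, F i) ≤ 0 := hD.trans (by nlinarith)
      have h2 : (⨆ i, F i) / (k:ℝ)^2 ≤ 0 := div_nonpos_of_nonpos_of_nonneg h1 (by positivity)
      exact le_trans h2 dist_nonneg
  · push_neg at hMpos
    set ε := M / k with hε
    have hεpos : 0 < ε := div_pos hMpos hk0
    have key : ∃ t : Fin k, ∀ j, ¬ ((t:ℝ) * ε < g j ∧ g j ≤ ((t:ℝ) + 1) * ε) := by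
      by_contra h
      push_neg at h
      choose φ hφ1 hφ2 using h
      have hinj : Function.Injective φ := by
        intro t t' htt
        by_contra hne
        rcases lt_or_gt_of_ne hne with hlt | hlt
        · have h1 : ((t:ℝ) + 1) ≤ (t' : ℝ) := by exact_mod_cast hlt
          have : g (φ t) < g (φ t') := lt_of_le_of_lt (hφ2 t)
            (lt_of_le_of_lt (mul_le_mul_of_nonneg_right h1 hεpos.le) (hφ1 t'))
          rw [htt] at this; exact lt_irrefl _ this
        · have h1 : ((t':ℝ) + 1) ≤ (t : ℝ) := by exact_mod_cast hlt
          have : g (φ t') < g (φ t) := lt_of_le_of_lt (hφ2 t')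
            (lt_of_le_of_lt (mul_le_mul_of_nonneg_right h1 hεpos.le) (hφ1 t))
          rw [htt] at this; exact lt_irrefl _ this
      have hsurj : Function.Surjective φ := Finite.surjective_of_injective hinj
      obtain ⟨t, ht⟩ := hsurj a
      have : (t:ℝ) * ε < g a := by rw [← ht] at *; exact hφ1 t
      rw [hga] at this
      have : (0:ℝ) ≤ (t:ℝ) * ε := mul_nonneg (by positivity) hεpos.le
      linarith [hφ1 t, hga, ht ▸ hφ1 t]
    obtain ⟨t, ht⟩ := key
    refine ⟨Finset.univ.filter (fun j => g j ≤ (t:ℝ) * ε), ?_, ?_, ?_⟩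
    · exact ⟨a, by simp [hga, mul_nonneg (by positivity : (0:ℝ) ≤ (t:ℝ)) hεpos.le]⟩
    · refine ⟨b, ?_⟩
      simp only [Finset.mem_compl, Finset.mem_filter, Finset.mem_univ, true_and, not_le]
      have htk : (t:ℝ) ≤ (k:ℝ) - 1 := by
        have := t.isLt; have : (t:ℝ) ≤ (k:ℝ) - 1 := by
          have h2 : (t:ℕ) + 1 ≤ k := t.isLt
          have : ((t:ℕ):ℝ) + 1 ≤ (k:ℝ) := by exact_mod_cast h2
          linarith
        exact this
      have : (t:ℝ) * ε ≤ ((k:ℝ) - 1) * ε := mul_le_mul_of_nonneg_right htk hεpos.le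
      have hkε : (k:ℝ) * ε = M := by rw [hε, mul_div_cancel₀ M hk0.ne']
      nlinarith
    · intro i hi j hj
      simp only [Finset.mem_filter, Finset.mem_univ, true_and] at hi
      simp only [Finset.mem_compl, Finset.mem_filter, Finset.mem_univ, true_and, not_le] at hj
      have hj2 : ((t:ℝ) + 1) * ε < g j := by
        rcases lt_or_ge (((t:ℝ) + 1) * ε) (g j) with h | h
        · exact h
        · exact absurd ⟨hj, h⟩ (ht j)
      have htri : g j ≤ g i + dist (v i) (v j) := dist_triangle (v a) (v i) (v j)
      have hdist : ε ≤ dist (v i) (v j) := by nlinarith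
      have hsup : (⨆ i, F i) / (k:ℝ)^2 ≤ ε := by
        rw [div_le_iff₀ (by positivity)]
        have : (k:ℝ)^2 * ε = k * M := by rw [hε, sq, mul_assoc, mul_div_cancel₀ M hk0.ne']
        nlinarith
      exact le_trans hsup hdist
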